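/- Assume 𝔱 = 𝔠. If G is a subgroup of the permutation group S_ω such that the coarse space (ω, E_G) is indiscrete, then there exists a free ultrafilter p on ω whose orbit Gp (in βω, under the action gp = {g(A) : A ∈ p}) is not discrete, but every subspace A ⊆ Gp of cardinality |A| < 𝔠 is discrete. -/

import Mathlib

open Cardinal

/-- The tower number `𝔱`: the least cardinality of a family of infinite
subsets of `ω`, linearly (pre)ordered by almost inclusion `⊆*`, having no
infinite pseudo-intersection. -/
noncomputable def towerNumber : Cardinal :=
  sInf { c : Cardinal | ∃ T : Set (Set ℕ), #T = c ∧ (∀ t ∈ T, t.Infinite) ∧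
    (∀ s ∈ T, ∀ t ∈ T, (s \ t).Finite ∨ (t \ s).Finite) ∧
    ∀ s : Set ℕ, s.Infinite → ∃ t ∈ T, (s \ t).Infinite }

def IsFreeUF (𝒰 : Ultrafilter ℕ) : Prop := ∀ A : Set ℕ, A.Finite → A ∉ 𝒰

/-- `D ⊆ ω` is discrete in the finitary coarse structure `E_G`: for every
finite set `F` of elements of `G`, only finitely many `x ∈ D` satisfy
`Fx ∩ D ≠ {x}`. -/
def IsEGDiscrete (G : Subgroup (Equiv.Perm ℕ)) (D : Set ℕ) : Prop :=
  ∀ F : Finset (Equiv.Perm ℕ), (↑F : Set (Equiv.Perm ℕ)) ⊆ (G : Set (Equiv.Perm ℕ)) →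
    {x ∈ D | ∃ g ∈ F, g x ∈ D ∧ g x ≠ x}.Finite

/-- The coarse space `(ω, E_G)` is indiscrete: every `E_G`-discrete set is
finite (equivalently, bounded). -/
def IsEGIndiscrete (G : Subgroup (Equiv.Perm ℕ)) : Prop :=
  ∀ D : Set ℕ, IsEGDiscrete G D → D.Finite

def orbitUF (G : Subgroup (Equiv.Perm ℕ)) (𝒰 : Ultrafilter ℕ) :
    Set (Ultrafilter ℕ) :=
  {q | ∃ g ∈ G, q = Ultrafilter.map (⇑g) 𝒰}

private lemma diffFin_trans {α : Type*} {s t u : Set α} (h1 : (s \ t).Finite)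
    (h2 : (t \ u).Finite) : (s \ u).Finite := by
  refine (h1.union h2).subset fun x hx => ?_
  by_cases hxt : x ∈ t
  · exact Or.inr ⟨hxt, hx.2⟩
  · exact Or.inl ⟨hx.1, hxt⟩

private lemma exists_avoiding (g : Equiv.Perm ℕ) (E : Set ℕ) (hE : E.Infinite)
    (hfix : ∀ x ∈ E, g x ≠ x) : ∃ X, X ⊆ E ∧ X.Infinite ∧ ∀ x ∈ X, g x ∉ X := by
  classical
  have hpick : ∀ s : Finset ℕ, ∃ x, x ∈ E ∧ x ∉ ((s : Set ℕ) ∪ (⇑g '' s) ∪ (⇑g.symm '' s)) := by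
    intro s
    have hfin : (((s : Set ℕ)) ∪ (⇑g '' s) ∪ (⇑g.symm '' s)).Finite :=
      (s.finite_toSet.union (s.finite_toSet.image _)).union (s.finite_toSet.image _)
    obtain ⟨x, hx⟩ := (hE.diff hfin).nonempty
    exact ⟨x, hx.1, hx.2⟩
  choose pick hpickE hpickNot using hpick
  let F : ℕ → Finset ℕ := fun n => Nat.rec ∅ (fun _ s => insert (pick s) s) n
  have hFsucc : ∀ n, F (n + 1) = insert (pick (F n)) (F n) := fun _ => rfl
  have hnew : ∀ s : Finset ℕ, pick s ∉ s := by
    intro s hs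
    exact hpickNot s (Or.inl (Or.inl hs))
  have hgnew : ∀ s : Finset ℕ, ∀ y ∈ s, g (pick s) ≠ y := by
    intro s y hy hgy
    exact hpickNot s (Or.inr ⟨y, hy, by rw [← hgy]; exact g.symm_apply_apply _⟩)
  have hgnew' : ∀ s : Finset ℕ, ∀ y ∈ s, g y ≠ pick s := by
    intro s y hy hgy
    exact hpickNot s (Or.inl (Or.inr ⟨y, hy, hgy⟩))
  have hmono : Monotone F := monotone_nat_of_le_succ fun n => by
    rw [hFsucc]; exact Finset.subset_insert _ _
  have hFE : ∀ n, ∀ x ∈ F n, x ∈ E := by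
    intro n
    induction n with
    | zero => simp [F]
    | succ k ih =>
      intro x hx
      rw [hFsucc] at hx
      rcases Finset.mem_insert.mp hx with h | h
      · exact h ▸ hpickE (F k)
      · exact ih x h
  have hcard : ∀ n, n ≤ (F n).card := by
    intro n
    induction n with
    | zero => simp
    | succ k ih =>
      rw [hFsucc, Finset.card_insert_of_notMem (hnew (F k))]
      omega
  have havoid : ∀ n, ∀ x ∈ F n, ∀ y ∈ F n, g x ≠ y := by
    intro n
    induction n with
    | zero => simp [F]
    | succ k ih =>
      intro x hx y hy
      rw [hFsucc] at hx hy
      rcases Finset.mem_insert.mp hx with hx' | hx' <;>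
        rcases Finset.mem_insert.mp hy with hy' | hy'
      · subst hx'; subst hy'; exact hfix _ (hpickE (F k))
      · subst hx'; exact hgnew (F k) y hy'
      · subst hy'; exact hgnew' (F k) x hx'
      · exact ih x hx' y hy'
  refine ⟨{x | ∃ n, x ∈ F n}, ?_, ?_, ?_⟩
  · rintro x ⟨n, hn⟩; exact hFE n x hn
  · intro hfin
    have hsub : F (hfin.toFinset.card + 1) ⊆ hfin.toFinset := by
      intro x hx
      exact hfin.mem_toFinset.mpr ⟨hfin.toFinset.card + 1, hx⟩
    have := Finset.card_le_card hsub
    have := hcard (hfin.toFinset.card + 1)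
    omega
  · rintro x ⟨m, hm⟩ ⟨k, hk⟩
    have h1 : x ∈ F (max m k) := hmono (le_max_left m k) hm
    have h2 : g x ∈ F (max m k) := hmono (le_max_right m k) hk
    exact havoid _ x h1 (g x) h2 rfl

private lemma exists_step {G : Subgroup (Equiv.Perm ℕ)} (hG : IsEGIndiscrete G)
    (D : Set ℕ) (hD : D.Infinite) :
    ∃ X, X ⊆ D ∧ X.Infinite ∧ ∃ g : Equiv.Perm ℕ, g ∈ G ∧
      (∀ x ∈ X, g x ≠ x ∧ g x ∉ X) ∧ ∀ x ∈ X, g x ∈ D := by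
  have hnd : ¬ IsEGDiscrete G D := fun h => hD (hG D h)
  rw [IsEGDiscrete] at hnd
  push_neg at hnd
  obtain ⟨F, hFG, hFinf⟩ := hnd
  have hpig : ∃ g ∈ F, {x ∈ D | g x ∈ D ∧ g x ≠ x}.Infinite := by
    by_contra hcon
    push_neg at hcon
    apply hFinf
    have hsub : {x ∈ D | ∃ g ∈ F, g x ∈ D ∧ g x ≠ x} ⊆
        ⋃ g ∈ F, {x ∈ D | g x ∈ D ∧ g x ≠ x} := by
      rintro x ⟨hxD, g, hgF, h1, h2⟩
      exact Set.mem_biUnion hgF ⟨hxD, h1, h2⟩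
    exact (Set.Finite.biUnion F.finite_toSet
      (fun g hg => hcon g hg)).subset hsub
  obtain ⟨g, hgF, hEinf⟩ := hpig
  obtain ⟨X, hXE, hXinf, hXavoid⟩ := exists_avoiding g _ hEinf (fun x hx => hx.2.2)
  exact ⟨X, fun x hx => (hXE hx).1, hXinf, g, hFG hgF,
    fun x hx => ⟨(hXE hx).2.2, hXavoid x hx⟩, fun x hx => (hXE hx).2.1⟩

private lemma exists_pseudo (ht : towerNumber = Cardinal.continuum)
    (fam : Set (Set ℕ)) (hc : #fam < Cardinal.continuum)
    (hinf : ∀ t ∈ fam, t.Infinite)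
    (hch : ∀ s ∈ fam, ∀ t ∈ fam, (s \ t).Finite ∨ (t \ s).Finite) :
    ∃ s : Set ℕ, s.Infinite ∧ ∀ t ∈ fam, (s \ t).Finite := by
  by_contra hcon
  push_neg at hcon
  have hmem : #fam ∈ { c : Cardinal | ∃ T : Set (Set ℕ), #T = c ∧ (∀ t ∈ T, t.Infinite) ∧
      (∀ s ∈ T, ∀ t ∈ T, (s \ t).Finite ∨ (t \ s).Finite) ∧
      ∀ s : Set ℕ, s.Infinite → ∃ t ∈ T, (s \ t).Infinite } := by
    refine ⟨fam, rfl, hinf, hch, fun s hs => ?_⟩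
    obtain ⟨t, htf, hfin⟩ := hcon s hs
    exact ⟨t, htf, hfin⟩
  have hle : towerNumber ≤ #fam := csInf_le' hmem
  rw [ht] at hle
  exact absurd hc (not_lt.mpr hle)

/-- Index type: the canonical well-order of length `𝔠`. -/
abbrev IotC : Type := (Cardinal.continuum.ord).ToType

/-- The property the set chosen at stage `i` must satisfy, given previous stages. -/
def GoodRel (G : Subgroup (Equiv.Perm ℕ)) (Senum : IotC → Set ℕ) (i : IotC)
    (prev : ∀ j : IotC, j < i → Set ℕ) (X : Set ℕ) : Prop :=
  X.Infinite ∧ (∀ j (hj : j < i), (X \ prev j hj).Finite) ∧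
    (X ⊆ Senum i ∨ X ∩ Senum i = ∅) ∧
    ∃ g : Equiv.Perm ℕ, g ∈ G ∧ (∀ x ∈ X, g x ≠ x ∧ g x ∉ X) ∧
      ∀ j (hj : j < i), ((⇑g '' X) \ prev j hj).Finite

open Classical in
noncomputable def Tchain (G : Subgroup (Equiv.Perm ℕ)) (Senum : IotC → Set ℕ) : IotC → Set ℕ :=
  (wellFounded_lt (α := IotC)).fix fun i prev =>
    if h : ∃ X, GoodRel G Senum i prev X then h.choose else ∅

open Classical in
lemma Tchain_eq (G : Subgroup (Equiv.Perm ℕ)) (Senum : IotC → Set ℕ) (i : IotC) :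
    Tchain G Senum i =
      if h : ∃ X, GoodRel G Senum i (fun j _ => Tchain G Senum j) X then h.choose else ∅ := by
  unfold Tchain
  exact WellFounded.fix_eq _ _ i

lemma tchain_good (G : Subgroup (Equiv.Perm ℕ)) (ht : towerNumber = Cardinal.continuum)
    (hG : IsEGIndiscrete G) (Senum : IotC → Set ℕ) :
    ∀ i : IotC, GoodRel G Senum i (fun j _ => Tchain G Senum j) (Tchain G Senum i) := by
  classical
  intro i
  induction i using (wellFounded_lt (α := IotC)).induction with
  | _ i IH =>
  have hex : ∃ X, GoodRel G Senum i (fun j _ => Tchain G Senum j) X := by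
    set T : IotC → Set ℕ := Tchain G Senum with hTdef
    set fam : Set (Set ℕ) := Set.range (fun j : Set.Iio i => T j.1) with hfam
    have hcard : #fam < Cardinal.continuum :=
      lt_of_le_of_lt Cardinal.mk_range_le (Cardinal.mk_Iio_ord_toType i)
    have hinf : ∀ t ∈ fam, t.Infinite := by
      rintro t ⟨⟨j, hj⟩, rfl⟩
      exact (IH j hj).1
    have hch : ∀ s ∈ fam, ∀ t ∈ fam, (s \ t).Finite ∨ (t \ s).Finite := by
      rintro s ⟨⟨j₁, hj₁⟩, rfl⟩ t ⟨⟨j₂, hj₂⟩, rfl⟩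
      rcases lt_trichotomy j₁ j₂ with h | h | h
      · exact Or.inr ((IH j₂ hj₂).2.1 j₁ h)
      · subst h; exact Or.inl (by simp)
      · exact Or.inl ((IH j₁ hj₁).2.1 j₂ h)
    obtain ⟨base, hbinf, hbps⟩ := exists_pseudo ht fam hcard hinf hch
    have hbT : ∀ j (hj : j < i), (base \ T j).Finite := fun j hj =>
      hbps _ ⟨⟨j, hj⟩, rfl⟩
    by_cases hDS : (base ∩ Senum i).Infinite
    · obtain ⟨X, hXD, hXinf, g, hgG, hgx, hgD⟩ := exists_step hG _ hDS
      have hXb : X ⊆ base := fun x hx => (hXD hx).1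
      refine ⟨X, hXinf, fun j hj => (hbT j hj).subset (fun x hx => ⟨hXb hx.1, hx.2⟩),
        Or.inl (fun x hx => (hXD hx).2), g, hgG, hgx, fun j hj => ?_⟩
      refine (hbT j hj).subset (fun x hx => ⟨?_, hx.2⟩)
      obtain ⟨z, hz, rfl⟩ := hx.1
      exact (hgD z hz).1
    · have hD : (base \ Senum i).Infinite := by
        rw [← Set.diff_self_inter]
        exact hbinf.diff (Set.not_infinite.mp hDS)
      obtain ⟨X, hXD, hXinf, g, hgG, hgx, hgD⟩ := exists_step hG _ hD
      have hXb : X ⊆ base := fun x hx => (hXD hx).1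
      refine ⟨X, hXinf, fun j hj => (hbT j hj).subset (fun x hx => ⟨hXb hx.1, hx.2⟩),
        Or.inr ?_, g, hgG, hgx, fun j hj => ?_⟩
      · ext x
        simp only [Set.mem_inter_iff, Set.mem_empty_iff_false, iff_false, not_and]
        intro hx
        exact (hXD hx).2
      · refine (hbT j hj).subset (fun x hx => ⟨?_, hx.2⟩)
        obtain ⟨z, hz, rfl⟩ := hx.1
        exact (hgD z hz).1
  have key : Tchain G Senum i =
      if h : ∃ X, GoodRel G Senum i (fun j _ => Tchain G Senum j) X then h.choose else ∅ :=
    Tchain_eq G Senum i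
  rw [key, dif_pos hex]
  exact hex.choose_spec

section MainProof

theorem indiscrete_gives_ultrafilter_with_nondiscrete_orbit
    (ht : towerNumber = Cardinal.continuum)
    (G : Subgroup (Equiv.Perm ℕ)) (hG : IsEGIndiscrete G) :
    ∃ p : Ultrafilter ℕ, IsFreeUF p ∧
      ¬ DiscreteTopology (orbitUF G p) ∧
      ∀ A : Set (Ultrafilter ℕ), A ⊆ orbitUF G p → #A < Cardinal.continuum →
        DiscreteTopology A := by
  classical
  have hmkI : #IotC = Cardinal.continuum := by
    rw [Cardinal.mk_toType, Cardinal.card_ord]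
  have hmkS : #(Set ℕ) = Cardinal.continuum := by
    rw [Cardinal.mk_set, Cardinal.mk_nat, Cardinal.two_power_aleph0]
  obtain ⟨e⟩ : Nonempty (IotC ≃ Set ℕ) := Cardinal.eq.mp (hmkI.trans hmkS.symm)
  have hne : Nonempty IotC := ⟨e.symm ∅⟩
  set Senum : IotC → Set ℕ := ⇑e with hSe
  have hsurj : Function.Surjective Senum := e.surjective
  set T : IotC → Set ℕ := Tchain G Senum with hT
  have good : ∀ i, GoodRel G Senum i (fun j _ => T j) (T i) := tchain_good G ht hG Senum
  have Tinf : ∀ i, (T i).Infinite := fun i => (good i).1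
  have Tlt : ∀ {j i : IotC}, j < i → (T i \ T j).Finite := fun {j i} h => (good i).2.1 j h
  have Tle : ∀ {j i : IotC}, j ≤ i → (T i \ T j).Finite := by
    intro j i h
    rcases h.lt_or_eq with h | h
    · exact Tlt h
    · subst h; simp
  have Tdec : ∀ i, T i ⊆ Senum i ∨ T i ∩ Senum i = ∅ := fun i => (good i).2.2.1
  have Tg : ∀ i, ∃ g : Equiv.Perm ℕ, g ∈ G ∧ (∀ x ∈ T i, g x ≠ x ∧ g x ∉ T i) ∧
      ∀ j (hj : j < i), ((⇑g '' T i) \ T j).Finite := fun i => (good i).2.2.2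
  -- the filter generated by the tower
  set pF : Filter ℕ :=
    { sets := {A | ∃ i, (T i \ A).Finite}
      univ_sets := ⟨Classical.arbitrary IotC, by simp⟩
      sets_of_superset := by
        rintro A B ⟨i, hi⟩ hAB
        exact ⟨i, hi.subset (Set.diff_subset_diff_right hAB)⟩
      inter_sets := by
        rintro A B ⟨i, hi⟩ ⟨j, hj⟩
        refine ⟨max i j, ?_⟩
        rw [Set.diff_inter]
        exact (diffFin_trans (Tle (le_max_left i j)) hi).union
          (diffFin_trans (Tle (le_max_right i j)) hj) } with hpF
  have memF : ∀ A : Set ℕ, A ∈ pF ↔ ∃ i, (T i \ A).Finite := fun A => Iff.rfl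
  have hnotboth : ∀ s : Set ℕ, (∃ i, (T i \ s).Finite) → (∃ i, (T i \ sᶜ).Finite) → False := by
    rintro s ⟨i, hi⟩ ⟨j, hj⟩
    have h1 : (T (max i j) \ s).Finite := diffFin_trans (Tle (le_max_left i j)) hi
    have h2 : (T (max i j) \ sᶜ).Finite := diffFin_trans (Tle (le_max_right i j)) hj
    refine Set.not_infinite.mpr ((h1.union h2).subset fun x hx => ?_) (Tinf (max i j))
    by_cases hxs : x ∈ s
    · exact Or.inr ⟨hx, by simpa using hxs⟩
    · exact Or.inl ⟨hx, hxs⟩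
  have hdec : ∀ s : Set ℕ, (∃ i, (T i \ s).Finite) ∨ (∃ i, (T i \ sᶜ).Finite) := by
    intro s
    obtain ⟨i, rfl⟩ := hsurj s
    rcases Tdec i with h | h
    · exact Or.inl ⟨i, by rw [Set.diff_eq_empty.mpr h]; exact Set.finite_empty⟩
    · refine Or.inr ⟨i, ?_⟩
      have hsub : T i ⊆ (Senum i)ᶜ := by
        intro x hx hxs
        have hmem2 : x ∈ T i ∩ Senum i := ⟨hx, hxs⟩
        rw [h] at hmem2
        exact hmem2
      rw [Set.diff_eq_empty.mpr hsub]
      exact Set.finite_empty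
  set p : Ultrafilter ℕ := Ultrafilter.ofComplNotMemIff pF (by
    intro s
    constructor
    · intro hs
      rcases hdec s with h | h
      · exact h
      · exact absurd h hs
    · intro hs hcs
      exact hnotboth s hs hcs) with hp
  have mem_p : ∀ {A : Set ℕ}, A ∈ p ↔ ∃ i, (T i \ A).Finite := fun {A} => Iff.rfl
  have Tmem : ∀ i, T i ∈ p := fun i => mem_p.mpr ⟨i, by simp⟩
  have hfree : IsFreeUF p := by
    intro A hA hmem
    obtain ⟨i, hi⟩ := mem_p.mp hmem
    refine Set.not_infinite.mpr ((hi.union hA).subset fun x hx => ?_) (Tinf i)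
    by_cases h : x ∈ A
    · exact Or.inr h
    · exact Or.inl ⟨hx, h⟩
  -- no set is almost contained in the whole tower
  have nogp : ∀ s : Set ℕ, s.Infinite → ∃ i, (s \ T i).Infinite := by
    intro s hs
    by_contra hcon
    push_neg at hcon
    have hps : ∀ i, (s \ T i).Finite := fun i => hcon i
    set f : ℕ → ℕ := fun n => ((Set.Infinite.natEmbedding s hs) n : ℕ) with hf
    have hfinj : Function.Injective f := fun a b hab =>
      (Set.Infinite.natEmbedding s hs).injective (Subtype.coe_injective hab)
    have hfs : ∀ n, f n ∈ s := fun n => ((Set.Infinite.natEmbedding s hs) n).2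
    set s₁ : Set ℕ := f '' {n | Even n} with hs₁
    have hs₁s : s₁ ⊆ s := by rintro x ⟨n, _, rfl⟩; exact hfs n
    have hs₁inf : s₁.Infinite := by
      apply Set.infinite_of_injective_forall_mem (f := fun n : ℕ => f (2 * n))
      · intro a b hab
        have := hfinj hab; omega
      · intro a
        exact ⟨2 * a, ⟨a, two_mul a⟩, rfl⟩
    have hs₂inf : (s \ s₁).Infinite := by
      apply Set.infinite_of_injective_forall_mem (f := fun n : ℕ => f (2 * n + 1))
      · intro a b hab
        have := hfinj hab; omega
      · intro a
        refine ⟨hfs _, ?_⟩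
        rintro ⟨m, hm, heq⟩
        have := hfinj heq
        subst this
        simp [Nat.even_iff] at hm
    obtain ⟨i₁, hi₁⟩ := hsurj s₁
    rcases Tdec i₁ with h | h
    · rw [hi₁] at h
      -- T i₁ ⊆ s₁ ; then s \ s₁ ⊆ s \ T i₁ finite, contradiction
      refine Set.not_infinite.mpr ((hps i₁).subset fun x hx => ⟨hx.1, fun hxT => hx.2 (h hxT)⟩) hs₂inf
    · rw [hi₁] at h
      -- T i₁ ∩ s₁ = ∅ ; then s₁ ⊆ s \ T i₁ finite, contradiction
      refine Set.not_infinite.mpr ((hps i₁).subset fun x hx => ⟨hs₁s hx, fun hxT => ?_⟩) hs₁inf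
      have : x ∈ T i₁ ∩ s₁ := ⟨hxT, hx⟩
      rw [h] at this
      exact this
  have hgt : ∀ i : IotC, ∃ j, i < j := by
    intro i
    by_contra hcon
    push_neg at hcon
    obtain ⟨i', hi'⟩ := nogp (T i) (Tinf i)
    exact Set.not_infinite.mpr (Tle (hcon i')) hi'
  -- key lemma for non-discreteness
  have hmain : ∀ B ∈ p, ∃ g : Equiv.Perm ℕ, g ∈ G ∧ Ultrafilter.map ⇑g p ≠ p ∧
      B ∈ Ultrafilter.map ⇑g p := by
    intro B hB
    obtain ⟨i, hi⟩ := mem_p.mp hB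
    obtain ⟨j, hij⟩ := hgt i
    obtain ⟨g, hgG, hgx, hgim⟩ := Tg j
    refine ⟨g, hgG, ?_, ?_⟩
    · intro heq
      have h1 : ⇑g ⁻¹' (T j) ∈ p := by
        have h2 := Tmem j
        rw [← heq] at h2
        exact Ultrafilter.mem_map.mp h2
      obtain ⟨k, hk⟩ := mem_p.mp h1
      have h2 : (T (max j k) \ T j).Finite := Tle (le_max_left j k)
      have h3 : (T (max j k) \ ⇑g ⁻¹' (T j)).Finite :=
        diffFin_trans (Tle (le_max_right j k)) hk
      refine Set.not_infinite.mpr ((h2.union h3).subset fun x hx => ?_) (Tinf (max j k))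
      by_cases h4 : x ∈ T j
      · refine Or.inr ⟨hx, fun h5 => ?_⟩
        exact (hgx x h4).2 h5
      · exact Or.inl ⟨hx, h4⟩
    · rw [Ultrafilter.mem_map]
      refine mem_p.mpr ⟨j, ?_⟩
      have himg : ((⇑g '' T j) \ T i).Finite := hgim i hij
      have hsub : T j \ ⇑g ⁻¹' B ⊆ ⇑g ⁻¹' (((⇑g '' T j) \ T i) ∪ (T i \ B)) := by
        rintro x ⟨hxj, hxB⟩
        simp only [Set.mem_preimage, Set.mem_union]
        by_cases h : g x ∈ T i
        · exact Or.inr ⟨h, hxB⟩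
        · exact Or.inl ⟨⟨x, hxj, rfl⟩, h⟩
      exact (((himg.union hi).preimage (g.injective.injOn)).subset hsub)
  have horb : ∀ g : Equiv.Perm ℕ, g ∈ G → Ultrafilter.map ⇑g p ∈ orbitUF G p :=
    fun g hg => ⟨g, hg, rfl⟩
  have hporb : p ∈ orbitUF G p := ⟨1, G.one_mem, by
    rw [Equiv.Perm.coe_one]
    exact (Ultrafilter.map_id p).symm⟩
  have hnd : ¬ DiscreteTopology (orbitUF G p) := by
    intro hd
    have hopen : IsOpen ({⟨p, hporb⟩} : Set (orbitUF G p)) := isOpen_discrete _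
    rw [isOpen_induced_iff] at hopen
    obtain ⟨U, hU, hUeq⟩ := hopen
    have hpU : p ∈ U := by
      have h1 : (⟨p, hporb⟩ : orbitUF G p) ∈ Subtype.val ⁻¹' U := by
        rw [hUeq]; exact rfl
      exact h1
    obtain ⟨v, hvB, hpv, hvU⟩ := ultrafilterBasis_is_basis.exists_subset_of_mem_open hpU hU
    obtain ⟨B, rfl⟩ := hvB
    obtain ⟨g, hgG, hne', hmem'⟩ := hmain B hpv
    have h2 : (⟨Ultrafilter.map ⇑g p, horb g hgG⟩ : orbitUF G p) ∈ Subtype.val ⁻¹' U :=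
      hvU hmem'
    rw [hUeq] at h2
    exact hne' (congrArg Subtype.val (Set.mem_singleton_iff.mp h2))
  refine ⟨p, hfree, hnd, ?_⟩
  intro A hAorb hAcard
  rw [discreteTopology_iff_isOpen_singleton]
  rintro ⟨q, hqA⟩
  have hfree' : ∀ q' ∈ A, ∀ C : Set ℕ, C.Finite → C ∉ q' := by
    intro q' hq' C hC hCq'
    obtain ⟨h, hhG, rfl⟩ := hAorb hq'
    exact hfree _ (hC.preimage (h.injective.injOn)) (Ultrafilter.mem_map.mp hCq')
  obtain ⟨g, hgG, hqeq⟩ := hAorb hqA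
  have hsep : ∀ y : ↥(A \ {q}), ∃ C : Set ℕ, C ∈ q ∧ C ∉ (y : Ultrafilter ℕ) := by
    rintro ⟨q', hq'⟩
    by_contra hcon
    push_neg at hcon
    have hle : (q' : Filter ℕ) ≤ (q : Filter ℕ) := fun s hs => hcon s hs
    exact hq'.2 (Set.mem_singleton_iff.mpr (Ultrafilter.eq_of_le hle))
  choose C hCq hCy using hsep
  have hCp : ∀ y : ↥(A \ {q}), ⇑g ⁻¹' (C y) ∈ p := by
    intro y
    have := hCq y
    rw [hqeq] at this
    exact Ultrafilter.mem_map.mp this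
  choose idx hidx using fun y => mem_p.mp (hCp y)
  by_cases hbd : ∃ j : IotC, ∀ y, idx y < j
  · obtain ⟨j, hj⟩ := hbd
    set B : Set ℕ := ⇑g '' T j with hB
    have hBq : B ∈ q := by
      rw [hqeq, Ultrafilter.mem_map, Set.preimage_image_eq _ g.injective]
      exact Tmem j
    have hBy : ∀ y : ↥(A \ {q}), B ∉ (y : Ultrafilter ℕ) := by
      intro y hBy'
      have hfin : (B \ C y).Finite := by
        have h1 : (T j \ ⇑g ⁻¹' (C y)).Finite := diffFin_trans (Tlt (hj y)) (hidx y)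
        have hsub : B \ C y ⊆ ⇑g '' (T j \ ⇑g ⁻¹' (C y)) := by
          rintro x ⟨⟨z, hz, rfl⟩, hxC⟩
          exact ⟨z, ⟨hz, hxC⟩, rfl⟩
        exact ((h1.image _).subset hsub)
      have hmemU : (B \ C y) ∪ C y ∈ (y : Ultrafilter ℕ) := by
        refine Filter.mem_of_superset hBy' fun x hx => ?_
        by_cases h : x ∈ C y
        · exact Or.inr h
        · exact Or.inl ⟨hx, h⟩
      rcases Ultrafilter.union_mem_iff.mp hmemU with h | h
      · exact hfree' _ y.2.1 _ hfin h
      · exact hCy y h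
    rw [isOpen_induced_iff]
    refine ⟨{u : Ultrafilter ℕ | B ∈ u}, ultrafilter_isOpen_basic B, ?_⟩
    ext a
    simp only [Set.mem_preimage, Set.mem_singleton_iff, Set.mem_setOf_eq]
    constructor
    · intro hBa
      by_contra hne'
      have haq : (a : Ultrafilter ℕ) ≠ q := fun h => hne' (Subtype.ext h)
      exact hBy ⟨a.1, a.2, fun h => haq (Set.mem_singleton_iff.mp h)⟩ hBa
    · intro h
      rw [h]
      exact hBq
  · exfalso
    push_neg at hbd
    set fam : Set (Set ℕ) := Set.range (fun y : ↥(A \ {q}) => T (idx y)) with hfam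
    have hcard : #fam < Cardinal.continuum := by
      refine lt_of_le_of_lt Cardinal.mk_range_le ?_
      exact lt_of_le_of_lt (Cardinal.mk_le_mk_of_subset Set.diff_subset) hAcard
    have hinf : ∀ t ∈ fam, t.Infinite := by
      rintro t ⟨y, rfl⟩; exact Tinf _
    have hch : ∀ s ∈ fam, ∀ t ∈ fam, (s \ t).Finite ∨ (t \ s).Finite := by
      rintro s ⟨y₁, rfl⟩ t ⟨y₂, rfl⟩
      rcases le_total (idx y₁) (idx y₂) with h | h
      · exact Or.inr (Tle h)
      · exact Or.inl (Tle h)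
    obtain ⟨s, hsinf, hsps⟩ := exists_pseudo ht fam hcard hinf hch
    obtain ⟨i', hi'⟩ := nogp s hsinf
    obtain ⟨y, hy⟩ := hbd i'
    have hfin : (s \ T i').Finite :=
      diffFin_trans (hsps _ ⟨y, rfl⟩) (Tle hy)
    exact Set.not_infinite.mpr hfin hi'

end MainProof
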